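/- Let (T_k)_{k∈ℕ} be a sequence of bounded linear operators on a complex Hilbert space H, and suppose there exist constants A, B ≥ 0 such that for every j, ∑_{k} √‖T_j* T_k‖ ≤ A and ∑_{k} √‖T_j T_k*‖ ≤ B (in particular these series converge). Then for every vector x ∈ H the partial sums ∑_{k=1}^n T_k x converge in H as n → ∞, and the resulting limit operator S (defined by S x = lim_n ∑_{k=1}^n T_k x) is a bounded linear operator with ‖S‖² ≤ A·B. -/

import Mathlib

open ContinuousLinearMap

namespace CotlarSteinAux

variable {H : Type*} [NormedAddCommGroup H] [InnerProductSpace ℂ H] [CompleteSpace H]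

/-- `letter T true j = (T j)⋆`, `letter T false j = T j`. -/
noncomputable def letter (T : ℕ → (H →L[ℂ] H)) : Bool → ℕ → (H →L[ℂ] H)
  | true, j => star (T j)
  | false, j => T j

lemma norm_letter (T : ℕ → (H →L[ℂ] H)) (b : Bool) (j : ℕ) : ‖letter T b j‖ = ‖T j‖ := by
  cases b <;> simp [letter, norm_star]

/-- the "edge" quantity. -/
noncomputable def eAB (T : ℕ → (H →L[ℂ] H)) (b : Bool) (j k : ℕ) : ℝ :=
  ‖letter T b j * letter T (!b) k‖

lemma eAB_nonneg (T : ℕ → (H →L[ℂ] H)) (b : Bool) (j k : ℕ) : 0 ≤ eAB T b j k :=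
  norm_nonneg _

/-- alternating word operator. -/
noncomputable def word0 (T : ℕ → (H →L[ℂ] H)) : Bool → List ℕ → (H →L[ℂ] H)
  | _, [] => 1
  | b, (j :: l) => letter T b j * word0 T (!b) l

lemma word0_nil (T : ℕ → (H →L[ℂ] H)) (b : Bool) : word0 T b [] = 1 := by simp [word0]

lemma word0_cons (T : ℕ → (H →L[ℂ] H)) (b : Bool) (j : ℕ) (l : List ℕ) :
    word0 T b (j :: l) = letter T b j * word0 T (!b) l := by simp [word0]

/-- grouping where the first letter is paired with the second. -/
noncomputable def pa0 (T : ℕ → (H →L[ℂ] H)) : Bool → List ℕ → ℝ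
  | _, [] => 1
  | _, [j] => ‖T j‖
  | b, (j :: k :: l) => eAB T b j k * pa0 T b l

lemma pa0_nil (T : ℕ → (H →L[ℂ] H)) (b : Bool) : pa0 T b [] = 1 := by simp [pa0]

lemma pa0_single (T : ℕ → (H →L[ℂ] H)) (b : Bool) (j : ℕ) : pa0 T b [j] = ‖T j‖ := by
  simp [pa0]

lemma pa0_pair (T : ℕ → (H →L[ℂ] H)) (b : Bool) (j k : ℕ) (l : List ℕ) :
    pa0 T b (j :: k :: l) = eAB T b j k * pa0 T b l := by simp [pa0]

lemma pa0_nonneg (T : ℕ → (H →L[ℂ] H)) : ∀ (b : Bool) (l : List ℕ), 0 ≤ pa0 T b l := by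
  intro b l
  induction b, l using pa0.induct with
  | case1 b => simp [pa0_nil]
  | case2 b j => simp [pa0_single]
  | case3 b j k l ih => rw [pa0_pair]; exact mul_nonneg (eAB_nonneg T b j k) ih

lemma norm_word0_le_pa0 (T : ℕ → (H →L[ℂ] H)) :
    ∀ (b : Bool) (l : List ℕ), ‖word0 T b l‖ ≤ pa0 T b l := by
  intro b l
  induction b, l using pa0.induct with
  | case1 b => rw [word0_nil, pa0_nil]
               simpa [ContinuousLinearMap.one_def] using ContinuousLinearMap.norm_id_le
  | case2 b j =>
      rw [pa0_single, word0_cons, word0_nil, mul_one, norm_letter]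
  | case3 b j k l ih =>
      have h : word0 T b (j :: k :: l) = (letter T b j * letter T (!b) k) * word0 T b l := by
        rw [word0_cons, word0_cons, Bool.not_not, mul_assoc]
      rw [h, pa0_pair]
      exact (norm_mul_le _ _).trans (mul_le_mul_of_nonneg_left ih (norm_nonneg _))

lemma norm_word0_le_pb (T : ℕ → (H →L[ℂ] H)) (b : Bool) (j : ℕ) (l : List ℕ) :
    ‖word0 T b (j :: l)‖ ≤ ‖T j‖ * pa0 T (!b) l := by
  rw [word0_cons]
  refine (norm_mul_le _ _).trans ?_
  rw [norm_letter]
  exact mul_le_mul_of_nonneg_left (norm_word0_le_pa0 T _ _) (norm_nonneg _)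

/-- edge-factorized per-word bound (not including `√‖T head‖`). -/
noncomputable def tb (T : ℕ → (H →L[ℂ] H)) : Bool → ℕ → List ℕ → ℝ
  | _, j, [] => Real.sqrt ‖T j‖
  | b, j, (k :: l) => Real.sqrt (eAB T b j k) * tb T (!b) k l

lemma tb_nil (T : ℕ → (H →L[ℂ] H)) (b : Bool) (j : ℕ) : tb T b j [] = Real.sqrt ‖T j‖ := by
  simp [tb]

lemma tb_cons (T : ℕ → (H →L[ℂ] H)) (b : Bool) (j k : ℕ) (l : List ℕ) :
    tb T b j (k :: l) = Real.sqrt (eAB T b j k) * tb T (!b) k l := by simp [tb]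

lemma tb_nonneg (T : ℕ → (H →L[ℂ] H)) : ∀ (l : List ℕ) (b : Bool) (j : ℕ), 0 ≤ tb T b j l := by
  intro l
  induction l with
  | nil => intro b j; rw [tb_nil]; exact Real.sqrt_nonneg _
  | cons k l ih => intro b j; rw [tb_cons]; exact mul_nonneg (Real.sqrt_nonneg _) (ih _ _)

lemma sqrt_pa0_le_tb (T : ℕ → (H →L[ℂ] H)) :
    ∀ (l : List ℕ) (b : Bool) (j : ℕ),
      Real.sqrt (pa0 T b (j :: l) * pa0 T (!b) l) ≤ tb T b j l := by
  intro l
  induction l with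
  | nil =>
      intro b j
      rw [pa0_single, pa0_nil, mul_one, tb_nil]
  | cons k l ih =>
      intro b j
      have h2 : Real.sqrt (pa0 T b (j :: k :: l) * pa0 T (!b) (k :: l))
          = Real.sqrt (eAB T b j k) * Real.sqrt (pa0 T (!b) (k :: l) * pa0 T b l) := by
        rw [pa0_pair, mul_assoc, Real.sqrt_mul (eAB_nonneg T b j k), mul_comm (pa0 T b l)]
      rw [h2, tb_cons]
      refine mul_le_mul_of_nonneg_left ?_ (Real.sqrt_nonneg _)
      have := ih (!b) k
      rwa [Bool.not_not] at this

lemma norm_word0_le (T : ℕ → (H →L[ℂ] H)) (b : Bool) (j : ℕ) (l : List ℕ) :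
    ‖word0 T b (j :: l)‖ ≤ Real.sqrt ‖T j‖ * tb T b j l := by
  have h0 : ‖word0 T b (j :: l)‖ = Real.sqrt (‖word0 T b (j :: l)‖ * ‖word0 T b (j :: l)‖) :=
    (Real.sqrt_mul_self (norm_nonneg _)).symm
  rw [h0]
  have hmul : ‖word0 T b (j :: l)‖ * ‖word0 T b (j :: l)‖
      ≤ (‖T j‖ * pa0 T (!b) l) * pa0 T b (j :: l) :=
    mul_le_mul (norm_word0_le_pb T b j l) (norm_word0_le_pa0 T b _) (norm_nonneg _)
      (mul_nonneg (norm_nonneg _) (pa0_nonneg T _ _))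
  refine (Real.sqrt_le_sqrt hmul).trans ?_
  have h3 : (‖T j‖ * pa0 T (!b) l) * pa0 T b (j :: l)
      = ‖T j‖ * (pa0 T b (j :: l) * pa0 T (!b) l) := by ring
  rw [h3, Real.sqrt_mul (norm_nonneg _)]
  exact mul_le_mul_of_nonneg_left (sqrt_pa0_le_tb T l b j) (Real.sqrt_nonneg _)


/-- sums over words with fixed head letter. -/
noncomputable def X (T : ℕ → (H →L[ℂ] H)) (F : Finset ℕ) : ℕ → Bool → ℕ → (H →L[ℂ] H)
  | 0, b, j => letter T b j
  | (m+1), b, j => ∑ k ∈ F, letter T b j * X T F m (!b) k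

/-- scalar analogue of `X`. -/
noncomputable def G (T : ℕ → (H →L[ℂ] H)) (F : Finset ℕ) : ℕ → Bool → ℕ → ℝ
  | 0, _, j => Real.sqrt ‖T j‖
  | (m+1), b, j => ∑ k ∈ F, Real.sqrt (eAB T b j k) * G T F m (!b) k

lemma X_zero (T : ℕ → (H →L[ℂ] H)) (F : Finset ℕ) (b : Bool) (j : ℕ) :
    X T F 0 b j = letter T b j := by simp [X]

lemma X_succ (T : ℕ → (H →L[ℂ] H)) (F : Finset ℕ) (m : ℕ) (b : Bool) (j : ℕ) :
    X T F (m+1) b j = ∑ k ∈ F, letter T b j * X T F m (!b) k := by simp [X]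

lemma G_zero (T : ℕ → (H →L[ℂ] H)) (F : Finset ℕ) (b : Bool) (j : ℕ) :
    G T F 0 b j = Real.sqrt ‖T j‖ := by simp [G]

lemma G_succ (T : ℕ → (H →L[ℂ] H)) (F : Finset ℕ) (m : ℕ) (b : Bool) (j : ℕ) :
    G T F (m+1) b j = ∑ k ∈ F, Real.sqrt (eAB T b j k) * G T F m (!b) k := by simp [G]

/-- key induction: prefixed sums over words are controlled by `G`. -/
lemma norm_mul_X_le (T : ℕ → (H →L[ℂ] H)) (F : Finset ℕ) :
    ∀ (m : ℕ) (b : Bool) (j : ℕ) (P : H →L[ℂ] H) (c : ℝ), 0 ≤ c →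
      (∀ l : List ℕ, ‖P * word0 T b (j :: l)‖ ≤ c * tb T b j l) →
      ‖P * X T F m b j‖ ≤ c * G T F m b j := by
  intro m
  induction m with
  | zero =>
      intro b j P c hc h
      have h0 := h []
      rw [word0_cons, word0_nil, mul_one] at h0
      rw [X_zero, G_zero, ← tb_nil T b j]
      exact h0
  | succ m ih =>
      intro b j P c hc h
      have hexp : P * X T F (m+1) b j = ∑ k ∈ F, (P * letter T b j) * X T F m (!b) k := by
        rw [X_succ, Finset.mul_sum]
        exact Finset.sum_congr rfl fun k _ => (mul_assoc _ _ _).symm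
      rw [hexp]
      refine (norm_sum_le _ _).trans ?_
      have hterm : ∀ k ∈ F, ‖(P * letter T b j) * X T F m (!b) k‖
          ≤ (c * Real.sqrt (eAB T b j k)) * G T F m (!b) k := by
        intro k _
        refine ih (!b) k (P * letter T b j) _
          (mul_nonneg hc (Real.sqrt_nonneg _)) ?_
        intro l
        have hw : P * letter T b j * word0 T (!b) (k :: l) = P * word0 T b (j :: k :: l) := by
          rw [word0_cons T b j, mul_assoc]
        calc ‖P * letter T b j * word0 T (!b) (k :: l)‖
            = ‖P * word0 T b (j :: k :: l)‖ := by rw [hw]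
          _ ≤ c * tb T b j (k :: l) := h (k :: l)
          _ = c * Real.sqrt (eAB T b j k) * tb T (!b) k l := by rw [tb_cons]; ring
      refine (Finset.sum_le_sum hterm).trans ?_
      rw [G_succ, Finset.mul_sum]
      refine le_of_eq (Finset.sum_congr rfl fun k _ => by ring)

lemma norm_X_le (T : ℕ → (H →L[ℂ] H)) (F : Finset ℕ) (m : ℕ) (b : Bool) (j : ℕ) :
    ‖X T F m b j‖ ≤ Real.sqrt ‖T j‖ * G T F m b j := by
  have := norm_mul_X_le T F m b j 1 (Real.sqrt ‖T j‖) (Real.sqrt_nonneg _)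
    (fun l => by rw [one_mul]; exact norm_word0_le T b j l)
  rwa [one_mul] at this

/-- alternating powers of `∑ T` and `∑ (T)⋆`. -/
noncomputable def altP (T : ℕ → (H →L[ℂ] H)) (F : Finset ℕ) : Bool → ℕ → (H →L[ℂ] H)
  | _, 0 => 1
  | b, (m+1) => (∑ j ∈ F, letter T b j) * altP T F (!b) m

lemma altP_zero (T : ℕ → (H →L[ℂ] H)) (F : Finset ℕ) (b : Bool) : altP T F b 0 = 1 := by
  simp [altP]

lemma altP_succ (T : ℕ → (H →L[ℂ] H)) (F : Finset ℕ) (b : Bool) (m : ℕ) :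
    altP T F b (m+1) = (∑ j ∈ F, letter T b j) * altP T F (!b) m := by simp [altP]

lemma altP_eq_sum_X (T : ℕ → (H →L[ℂ] H)) (F : Finset ℕ) :
    ∀ (m : ℕ) (b : Bool), altP T F b (m+1) = ∑ j ∈ F, X T F m b j := by
  intro m
  induction m with
  | zero =>
      intro b
      rw [altP_succ, altP_zero, mul_one]
      exact Finset.sum_congr rfl fun j _ => (X_zero T F b j).symm
  | succ m ih =>
      intro b
      rw [altP_succ, ih (!b), Finset.sum_mul_sum]
      exact Finset.sum_congr rfl fun j _ => by rw [X_succ]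

lemma altP_two_mul (T : ℕ → (H →L[ℂ] H)) (F : Finset ℕ) :
    ∀ p : ℕ, altP T F true (2*(p+1))
      = (star (∑ j ∈ F, T j) * (∑ j ∈ F, T j)) ^ (p+1) := by
  have hs : (∑ j ∈ F, letter T true j) = star (∑ j ∈ F, T j) := by
    rw [star_sum]; rfl
  have hf : (∑ j ∈ F, letter T false j) = ∑ j ∈ F, T j := rfl
  intro p
  induction p with
  | zero =>
      have h2 : 2*(0+1) = 1+1 := rfl
      rw [h2, altP_succ, altP_succ, altP_zero, mul_one, pow_one]
      rw [hs]; rfl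
  | succ p ih =>
      have h2 : 2*(p+1+1) = (2*(p+1))+1+1 := by ring
      rw [h2, altP_succ, altP_succ]
      have hb : (!true) = false := rfl
      rw [hb]
      have hb2 : (!false) = true := rfl
      rw [hb2, ih, hs, hf, pow_succ' _ (p+1), mul_assoc]

/-- scalar alternating product bound. -/
noncomputable def pnt (A B : ℝ) : ℕ → Bool → ℝ
  | 0, _ => 1
  | (m+1), b => (bif b then A else B) * pnt A B m (!b)

lemma pnt_zero (A B : ℝ) (b : Bool) : pnt A B 0 b = 1 := by simp [pnt]

lemma pnt_succ (A B : ℝ) (m : ℕ) (b : Bool) :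
    pnt A B (m+1) b = (bif b then A else B) * pnt A B m (!b) := by simp [pnt]

lemma pnt_nonneg {A B : ℝ} (hA : 0 ≤ A) (hB : 0 ≤ B) : ∀ m b, 0 ≤ pnt A B m b := by
  intro m
  induction m with
  | zero => intro b; rw [pnt_zero]; norm_num
  | succ m ih =>
      intro b
      rw [pnt_succ]
      exact mul_nonneg (by cases b <;> simpa) (ih _)

lemma pnt_odd (A B : ℝ) : ∀ p : ℕ, pnt A B (2*p+1) true = A^(p+1) * B^p := by
  intro p
  induction p with
  | zero => simp [pnt_succ, pnt_zero]
  | succ p ih =>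
      have h2 : 2*(p+1)+1 = (2*p+1)+1+1 := by ring
      rw [h2, pnt_succ, pnt_succ]
      have : (!true) = false := rfl
      rw [this]
      have : (!false) = true := rfl
      rw [this, ih]
      simp [Bool.cond_true, Bool.cond_false]
      ring

lemma G_le (T : ℕ → (H →L[ℂ] H)) (F : Finset ℕ) (A B c₀ : ℝ) (hc₀ : 0 ≤ c₀)
    (hA : 0 ≤ A) (hB : 0 ≤ B)
    (hstep : ∀ (b : Bool) (j : ℕ), ∑ k ∈ F, Real.sqrt (eAB T b j k) ≤ (bif b then A else B))
    (hT : ∀ j, Real.sqrt ‖T j‖ ≤ c₀) :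
    ∀ (m : ℕ) (b : Bool) (j : ℕ), G T F m b j ≤ c₀ * pnt A B m b := by
  intro m
  induction m with
  | zero => intro b j; rw [G_zero, pnt_zero, mul_one]; exact hT j
  | succ m ih =>
      intro b j
      rw [G_succ, pnt_succ]
      have hcp : 0 ≤ c₀ * pnt A B m (!b) := mul_nonneg hc₀ (pnt_nonneg hA hB m _)
      calc ∑ k ∈ F, Real.sqrt (eAB T b j k) * G T F m (!b) k
          ≤ ∑ k ∈ F, Real.sqrt (eAB T b j k) * (c₀ * pnt A B m (!b)) :=
            Finset.sum_le_sum fun k _ =>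
              mul_le_mul_of_nonneg_left (ih (!b) k) (Real.sqrt_nonneg _)
        _ = (∑ k ∈ F, Real.sqrt (eAB T b j k)) * (c₀ * pnt A B m (!b)) := by
            rw [Finset.sum_mul]
        _ ≤ (bif b then A else B) * (c₀ * pnt A B m (!b)) :=
            mul_le_mul_of_nonneg_right (hstep b j) hcp
        _ = c₀ * ((bif b then A else B) * pnt A B m (!b)) := by ring

lemma G_nonneg (T : ℕ → (H →L[ℂ] H)) (F : Finset ℕ) :
    ∀ (m : ℕ) (b : Bool) (j : ℕ), 0 ≤ G T F m b j := by
  intro m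
  induction m with
  | zero => intro b j; rw [G_zero]; exact Real.sqrt_nonneg _
  | succ m ih =>
      intro b j
      rw [G_succ]
      exact Finset.sum_nonneg fun k _ => mul_nonneg (Real.sqrt_nonneg _) (ih _ _)

lemma eAB_true (T : ℕ → (H →L[ℂ] H)) (j k : ℕ) :
    eAB T true j k = ‖adjoint (T j) * T k‖ := by
  rw [eAB, ← star_eq_adjoint]; rfl

lemma eAB_false (T : ℕ → (H →L[ℂ] H)) (j k : ℕ) :
    eAB T false j k = ‖T j * adjoint (T k)‖ := by
  rw [eAB, ← star_eq_adjoint]; rfl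

theorem finite_cotlar_stein (T : ℕ → (H →L[ℂ] H)) (A B : ℝ) (hA : 0 ≤ A) (hB : 0 ≤ B)
    (hsumA : ∀ j, Summable fun k => Real.sqrt ‖adjoint (T j) * T k‖)
    (hleA : ∀ j, (∑' k, Real.sqrt ‖adjoint (T j) * T k‖) ≤ A)
    (hsumB : ∀ j, Summable fun k => Real.sqrt ‖T j * adjoint (T k)‖)
    (hleB : ∀ j, (∑' k, Real.sqrt ‖T j * adjoint (T k)‖) ≤ B)
    (F : Finset ℕ) : ‖∑ j ∈ F, T j‖ ^ 2 ≤ A * B := by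
  have hTA : ∀ j, ‖T j‖ ≤ A := by
    intro j
    have h1 : Real.sqrt ‖adjoint (T j) * T j‖ ≤ A :=
      (Summable.le_tsum (hsumA j) j fun k _ => Real.sqrt_nonneg _).trans (hleA j)
    have h2 : ‖adjoint (T j) * T j‖ = ‖T j‖ * ‖T j‖ := by
      rw [← star_eq_adjoint]; exact CStarRing.norm_star_mul_self
    rwa [h2, Real.sqrt_mul_self (norm_nonneg _)] at h1
  have hTB : ∀ j, ‖T j‖ ≤ B := by
    intro j
    have h1 : Real.sqrt ‖T j * adjoint (T j)‖ ≤ B :=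
      (Summable.le_tsum (hsumB j) j fun k _ => Real.sqrt_nonneg _).trans (hleB j)
    have h2 : ‖T j * adjoint (T j)‖ = ‖T j‖ * ‖T j‖ := by
      rw [← star_eq_adjoint]; exact CStarRing.norm_self_mul_star
    rwa [h2, Real.sqrt_mul_self (norm_nonneg _)] at h1
  have hAB : 0 ≤ A * B := mul_nonneg hA hB
  rcases eq_or_lt_of_le hA with hA0 | hApos
  · have hz : ∀ j, T j = 0 := fun j => norm_le_zero_iff.mp (by rw [hA0]; exact hTA j)
    rw [Finset.sum_eq_zero fun j _ => hz j]
    simpa using hAB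
  rcases eq_or_lt_of_le hB with hB0 | hBpos
  · have hz : ∀ j, T j = 0 := fun j => norm_le_zero_iff.mp (by rw [hB0]; exact hTB j)
    rw [Finset.sum_eq_zero fun j _ => hz j]
    simpa using hAB
  -- main case : A > 0, B > 0
  set S : H →L[ℂ] H := ∑ j ∈ F, T j with hSdef
  set R : H →L[ℂ] H := star S * S with hRdef
  set c₀ : ℝ := Real.sqrt (Real.sqrt (A*B)) with hc₀def
  have hT : ∀ j, Real.sqrt ‖T j‖ ≤ c₀ := by
    intro j
    refine Real.sqrt_le_sqrt ?_
    exact (Real.le_sqrt (norm_nonneg _) hAB).mpr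
      (by rw [pow_two]; exact mul_le_mul (hTA j) (hTB j) (norm_nonneg _) hA)
  have hstep : ∀ (b : Bool) (j : ℕ),
      ∑ k ∈ F, Real.sqrt (eAB T b j k) ≤ (bif b then A else B) := by
    intro b j
    cases b
    · have he : ∀ k, eAB T false j k = ‖T j * adjoint (T k)‖ := eAB_false T j
      simp only [he, Bool.cond_false]
      exact (Summable.sum_le_tsum F (fun k _ => Real.sqrt_nonneg _) (hsumB j)).trans (hleB j)
    · have he : ∀ k, eAB T true j k = ‖adjoint (T j) * T k‖ := eAB_true T j
      simp only [he, Bool.cond_true]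
      exact (Summable.sum_le_tsum F (fun k _ => Real.sqrt_nonneg _) (hsumA j)).trans (hleA j)
  have hGle := G_le T F A B c₀ (Real.sqrt_nonneg _) hA hB hstep hT
  have hc₀sq : c₀ * c₀ = Real.sqrt (A*B) := Real.mul_self_sqrt (Real.sqrt_nonneg _)
  have hRp : ∀ p : ℕ, ‖R ^ (p+1)‖
      ≤ (F.card : ℝ) * Real.sqrt (A*B) * (A^(p+1) * B^p) := by
    intro p
    have h2p : 2*(p+1) = (2*p+1)+1 := by ring
    have hRX : R ^ (p+1) = ∑ j ∈ F, X T F (2*p+1) true j := by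
      rw [← altP_two_mul T F p, h2p, altP_eq_sum_X]
    rw [hRX]
    refine (norm_sum_le _ _).trans ?_
    have hterm : ∀ j ∈ F, ‖X T F (2*p+1) true j‖ ≤ Real.sqrt (A*B) * (A^(p+1) * B^p) := by
      intro j _
      refine (norm_X_le T F (2*p+1) true j).trans ?_
      have := mul_le_mul (hT j) (hGle (2*p+1) true j) (G_nonneg T F _ _ _) (Real.sqrt_nonneg _)
      refine this.trans (le_of_eq ?_)
      rw [pnt_odd, ← mul_assoc, hc₀sq]
    refine (Finset.sum_le_sum hterm).trans (le_of_eq ?_)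
    rw [Finset.sum_const, nsmul_eq_mul, mul_assoc]
  have hsa : IsSelfAdjoint R := IsSelfAdjoint.star_mul_self S
  have hpow : ∀ n : ℕ, ‖R ^ (2^n)‖ = ‖R‖ ^ (2^n) := by
    intro n
    have h := hsa.nnnorm_pow_two_pow n
    calc ‖R ^ (2^n)‖ = ((‖R ^ (2^n)‖₊ : ℝ)) := by rw [coe_nnnorm]
      _ = ((‖R‖₊ ^ (2^n) : NNReal) : ℝ) := by rw [h]
      _ = ‖R‖ ^ (2^n) := by push_cast; rfl
  have hRnorm : ‖R‖ = ‖S‖ * ‖S‖ := CStarRing.norm_star_mul_self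
  set K : ℝ := (F.card : ℝ) * Real.sqrt (A*B) / B with hKdef
  have hkey : ∀ n : ℕ, (‖S‖ * ‖S‖) ^ (2^n) ≤ K * (A*B) ^ (2^n) := by
    intro n
    obtain ⟨p, hp⟩ : ∃ p, 2^n = p + 1 :=
      ⟨2^n - 1, (Nat.succ_pred_eq_of_pos (pow_pos (by norm_num) n)).symm⟩
    have h1 : (‖S‖ * ‖S‖) ^ (2^n) = ‖R ^ (2^n)‖ := by rw [← hRnorm, ← hpow n]
    rw [h1, hp]
    have heq : K * (A*B)^(p+1) = (F.card : ℝ) * Real.sqrt (A*B) * (A^(p+1) * B^p) := by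
      rw [hKdef, mul_pow]
      field_simp
      ring
    rw [heq]
    exact hRp p
  rw [pow_two]
  by_contra hcon
  push_neg at hcon
  have hy : 0 < A * B := mul_pos hApos hBpos
  have hr : 1 < (‖S‖ * ‖S‖) / (A * B) := (one_lt_div hy).mpr hcon
  have hdiv : ∀ n : ℕ, ((‖S‖ * ‖S‖) / (A * B))^(2^n) ≤ K := by
    intro n
    rw [div_pow]
    exact (div_le_iff₀ (pow_pos hy _)).mpr (hkey n)
  have h1 := tendsto_pow_atTop_atTop_of_one_lt hr
  have h2 : Filter.Tendsto (fun n : ℕ => 2^n) Filter.atTop Filter.atTop :=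
    tendsto_pow_atTop_atTop_of_one_lt one_lt_two
  obtain ⟨n, hn⟩ := ((h1.comp h2).eventually_gt_atTop K).exists
  exact absurd (hdiv n) (not_le.mpr hn)
end CotlarSteinAux



/-- **Cotlar–Stein lemma for infinite sums.** If `∑_k √‖(T j)† T k‖ ≤ A` and
`∑_k √‖T j (T k)†‖ ≤ B` for every `j`, then `∑_k T k` converges in the strong
operator topology to an operator `S` with `‖S‖² ≤ A * B`. -/
theorem cotlar_stein_infinite {H : Type*} [NormedAddCommGroup H] [InnerProductSpace ℂ H]
    [CompleteSpace H] (T : ℕ → (H →L[ℂ] H)) (A B : ℝ) (hA : 0 ≤ A) (hB : 0 ≤ B)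
    (hsumA : ∀ j, Summable fun k => Real.sqrt ‖adjoint (T j) * T k‖)
    (hleA : ∀ j, (∑' k, Real.sqrt ‖adjoint (T j) * T k‖) ≤ A)
    (hsumB : ∀ j, Summable fun k => Real.sqrt ‖T j * adjoint (T k)‖)
    (hleB : ∀ j, (∑' k, Real.sqrt ‖T j * adjoint (T k)‖) ≤ B) :
    ∃ S : H →L[ℂ] H,
      (∀ x : H, Filter.Tendsto (fun n => ∑ k ∈ Finset.range n, T k x)
        Filter.atTop (nhds (S x))) ∧
      ‖S‖ ^ 2 ≤ A * B := by
  classical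
  have hfin : ∀ F : Finset ℕ, ‖∑ j ∈ F, T j‖ ^ 2 ≤ A * B :=
    CotlarSteinAux.finite_cotlar_stein T A B hA hB hsumA hleA hsumB hleB
  have hAB : 0 ≤ A * B := mul_nonneg hA hB
  set L : ℝ := Real.sqrt (A*B) with hL
  have hopn : ∀ F : Finset ℕ, ‖∑ j ∈ F, T j‖ ≤ L := fun F =>
    (Real.le_sqrt (norm_nonneg _) hAB).mpr (hfin F)
  set P : ℕ → H →L[ℂ] H := fun n => ∑ k ∈ Finset.range n, T k with hPdef
  have hPle : ∀ n, ‖P n‖ ≤ L := fun n => hopn _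
  -- the submodule of vectors where the series is summable
  let V : Submodule ℂ H :=
    { carrier := {x | Summable fun k => T k x}
      add_mem' := fun {a b} ha hb => by
        have : (fun k => T k (a + b)) = fun k => T k a + T k b := by
          funext k; rw [map_add]
        show Summable fun k => T k (a + b)
        rw [this]; exact Summable.add ha hb
      zero_mem' := by
        show Summable fun k => T k 0
        simp only [map_zero]; exact summable_zero
      smul_mem' := fun c x hx => by
        have : (fun k => T k (c • x)) = fun k => c • T k x := by
          funext k; rw [map_smul]
        show Summable fun k => T k (c • x)
        rw [this]; exact (hx : Summable _).const_smul c }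
  let Ksub : Submodule ℂ H := ⨆ m, LinearMap.range (adjoint (T m) : H →ₗ[ℂ] H)
  have hker : ∀ x ∈ Ksubᗮ, ∀ k, T k x = 0 := by
    intro x hx k
    have hmem : adjoint (T k) (T k x) ∈ Ksub :=
      le_iSup (fun m => LinearMap.range (adjoint (T m) : H →ₗ[ℂ] H)) k ⟨T k x, rfl⟩
    have h0 := (Submodule.mem_orthogonal Ksub x).mp hx _ hmem
    rw [ContinuousLinearMap.adjoint_inner_left] at h0
    exact inner_self_eq_zero.mp h0
  have hVK : Ksub ≤ V := by
    refine iSup_le fun m => ?_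
    rintro x ⟨y, rfl⟩
    show Summable fun k => T k (adjoint (T m) y)
    have hsq : ∀ k, ‖T k * adjoint (T m)‖ = ‖T m * adjoint (T k)‖ := by
      intro k
      calc ‖T k * adjoint (T m)‖ = ‖star (T k * adjoint (T m))‖ := (norm_star _).symm
        _ = ‖star (adjoint (T m)) * star (T k)‖ := by rw [star_mul]
        _ = ‖T m * adjoint (T k)‖ := by
            simp only [star_eq_adjoint, adjoint_adjoint]
    have hsqB : ∀ k, Real.sqrt ‖T m * adjoint (T k)‖ ≤ B := fun k =>
      (Summable.le_tsum (hsumB m) k fun _ _ => Real.sqrt_nonneg _).trans (hleB m)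
    have hb : ∀ k, ‖T k (adjoint (T m) y)‖ ≤ (B * ‖y‖) * Real.sqrt ‖T m * adjoint (T k)‖ := by
      intro k
      have h1 : ‖T k (adjoint (T m) y)‖ ≤ ‖T k * adjoint (T m)‖ * ‖y‖ :=
        le_opNorm (T k * adjoint (T m)) y
      have h2 : ‖T k * adjoint (T m)‖
          = Real.sqrt ‖T m * adjoint (T k)‖ * Real.sqrt ‖T m * adjoint (T k)‖ := by
        rw [hsq k, Real.mul_self_sqrt (norm_nonneg _)]
      calc ‖T k (adjoint (T m) y)‖ ≤ ‖T k * adjoint (T m)‖ * ‖y‖ := h1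
        _ = Real.sqrt ‖T m * adjoint (T k)‖ * Real.sqrt ‖T m * adjoint (T k)‖ * ‖y‖ := by
            rw [h2]
        _ ≤ B * Real.sqrt ‖T m * adjoint (T k)‖ * ‖y‖ := by
            refine mul_le_mul_of_nonneg_right
              (mul_le_mul_of_nonneg_right (hsqB k) (Real.sqrt_nonneg _)) (norm_nonneg _)
        _ = (B * ‖y‖) * Real.sqrt ‖T m * adjoint (T k)‖ := by ring
    refine Summable.of_norm ?_
    exact Summable.of_nonneg_of_le (fun k => norm_nonneg _) hb ((hsumB m).mul_left (B * ‖y‖))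
  have hVKperp : Ksubᗮ ≤ V := by
    intro x hx
    show Summable fun k => T k x
    have : (fun k => T k x) = fun _ => (0 : H) := funext fun k => hker x hx k
    rw [this]; exact summable_zero
  have hWle : (Ksub ⊔ Ksubᗮ : Submodule ℂ H) ≤ V := sup_le hVK hVKperp
  have hdense : Dense ((Ksub ⊔ Ksubᗮ : Submodule ℂ H) : Set H) := by
    have htop : (Ksub ⊔ Ksubᗮ).topologicalClosure = ⊤ := by
      rw [Submodule.topologicalClosure_eq_top_iff]
      refine (Submodule.eq_bot_iff _).mpr fun x hx => ?_
      have h1 : x ∈ Ksubᗮ := Submodule.orthogonal_le le_sup_left hx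
      have h2 : x ∈ Ksubᗮᗮ := Submodule.orthogonal_le le_sup_right hx
      exact inner_self_eq_zero.mp ((Submodule.mem_orthogonal _ x).mp h2 x h1)
    exact Submodule.dense_iff_topologicalClosure_eq_top.mpr htop
  have hcauchy : ∀ x : H, CauchySeq fun n => P n x := by
    intro x
    rw [Metric.cauchySeq_iff]
    intro ε hε
    have hL0 : 0 ≤ L := Real.sqrt_nonneg _
    have hL1 : 0 < L + 1 := by linarith
    obtain ⟨w, hwW, hwx⟩ : ∃ w ∈ (Ksub ⊔ Ksubᗮ : Submodule ℂ H), dist x w < ε/(3*(L+1)) :=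
      Metric.mem_closure_iff.mp (hdense x) _ (by positivity)
    have hsw : Summable fun k => T k w := hWle hwW
    have hPw : (fun n => P n w) = fun n => ∑ k ∈ Finset.range n, T k w := by
      funext n; exact ContinuousLinearMap.sum_apply _ _ _
    have hcw : CauchySeq fun n => P n w := by
      rw [hPw]; exact hsw.hasSum.tendsto_sum_nat.cauchySeq
    rw [Metric.cauchySeq_iff] at hcw
    obtain ⟨N, hN⟩ := hcw (ε/3) (by positivity)
    refine ⟨N, fun m hm n hn => ?_⟩
    have key : ∀ q : ℕ, dist (P q x) (P q w) ≤ (L+1) * dist x w := by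
      intro q
      rw [dist_eq_norm, ← map_sub]
      calc ‖P q (x - w)‖ ≤ ‖P q‖ * ‖x - w‖ := le_opNorm _ _
        _ ≤ (L+1) * ‖x - w‖ :=
            mul_le_mul_of_nonneg_right ((hPle q).trans (by linarith)) (norm_nonneg _)
        _ = (L+1) * dist x w := by rw [dist_eq_norm]
    have hsmall : (L+1) * dist x w < ε/3 := by
      have := (mul_lt_mul_of_pos_left hwx hL1)
      calc (L+1) * dist x w < (L+1) * (ε/(3*(L+1))) := this
        _ = ε/3 := by field_simp
    calc dist (P m x) (P n x)
        ≤ dist (P m x) (P m w) + dist (P m w) (P n w) + dist (P n w) (P n x) :=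
          dist_triangle4 _ _ _ _
      _ < (L+1) * dist x w + ε/3 + (L+1) * dist x w := by
          have h1 := key m
          have h2 := hN m hm n hn
          have h3 := key n
          rw [dist_comm (P n w) (P n x)]
          linarith
      _ < ε := by linarith
  have hlim : ∀ x : H, ∃ y : H, Filter.Tendsto (fun n => P n x) Filter.atTop (nhds y) :=
    fun x => cauchySeq_tendsto_of_complete (hcauchy x)
  choose f hf using hlim
  have htends : Filter.Tendsto (fun n => fun x => P n x) Filter.atTop (nhds f) := by
    rw [tendsto_pi_nhds]; exact hf
  let S : H →L[ℂ] H := continuousLinearMapOfTendsto (fun n => P n) htends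
  have hScoe : ∀ x, S x = f x := fun x => rfl
  refine ⟨S, ?_, ?_⟩
  · intro x
    have h1 := hf x
    have h2 : (fun n => P n x) = fun n => ∑ k ∈ Finset.range n, T k x := by
      funext n; exact ContinuousLinearMap.sum_apply _ _ _
    rw [h2] at h1
    rw [hScoe]
    exact h1
  · have hSle : ‖S‖ ≤ L := by
      refine opNorm_le_bound S (Real.sqrt_nonneg _) fun x => ?_
      have hx := (hf x).norm
      have hb : ∀ n, ‖P n x‖ ≤ L * ‖x‖ := fun n =>
        (le_opNorm _ _).trans (mul_le_mul_of_nonneg_right (hPle n) (norm_nonneg _))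
      have := le_of_tendsto hx (Filter.Eventually.of_forall hb)
      rw [hScoe]
      exact this
    calc ‖S‖^2 ≤ L^2 := pow_le_pow_left₀ (norm_nonneg _) hSle 2
      _ = A * B := Real.sq_sqrt hAB
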